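/- arXiv:1903.06412 — 6 statements merged into one kernel-verified Lean document; each statement's English description precedes it below -/
import Mathlib

section
/- For any vector α in F_q^n with exactly k nonzero coordinates, there exists at least one consecutive partition (J, J̄) of [n] (where J consists of cyclically consecutive ⌈n/2⌉ coordinates) such that α restricted to J has exactly ⌈k/2⌉ nonzero coordinates and α restricted to J̄ has exactly ⌊k/2⌋ nonzero coordinates. -/
private lemma ivt_aux (g : ℕ → ℕ) (h : ∀ s, g (s+1) ≤ g s + 1) (t : ℕ) :
    ∀ N, g 0 ≤ t → t ≤ g N → ∃ s, g s = t := by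
  intro N
  induction N with
  | zero => intro h0 hN; exact ⟨0, le_antisymm hN h0 ▸ rfl⟩
  | succ N ih =>
    intro h0 hN
    by_cases hc : t ≤ g N
    · exact ih h0 hc
    · exact ⟨N + 1, by have := h N; omega⟩

private lemma mod2_aux (x n : ℕ) (hn : 0 < n) (h : x < 2 * n) :
    x % n = if x < n then x else x - n := by
  split_ifs with h'
  · exact Nat.mod_eq_of_lt h'
  · rw [Nat.mod_eq_sub_mod (le_of_not_gt h'), Nat.mod_eq_of_lt (by omega)]

private lemma fin_sub_val {n : ℕ} (hn : 0 < n) (a b : Fin n) :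
    ((a - b : Fin n) : ℕ) = if b.val ≤ a.val then a.val - b.val else a.val + n - b.val := by
  have ha := a.isLt
  have hb := b.isLt
  rw [Fin.sub_def]
  show (n - b.val + a.val) % n = _
  rw [mod2_aux _ n hn (by omega)]
  split_ifs <;> omega

open Fin.CommRing in
/-- For any `α ∈ F_q^n` with exactly `k` nonzero coordinates, there exists a
consecutive partition `(J, J̄)` of `[n]` (where `J` is a set of cyclically consecutive
`⌈n/2⌉` coordinates, here described as those `j` with `(j - i).val < ⌈n/2⌉` for a starting
index `i`) such that `α` has exactly `⌈k/2⌉` nonzero coordinates in `J` and exactly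
`⌊k/2⌋` nonzero coordinates in `J̄`. -/
theorem stmt_0 {F : Type*} [Field F] [DecidableEq F] {n k : ℕ} (hn : 0 < n)
    (α : Fin n → F) (hw : (Finset.univ.filter fun i => α i ≠ 0).card = k) :
    ∃ i : Fin n,
      ((Finset.univ.filter fun j : Fin n => ((j - i : Fin n) : ℕ) < (n + 1) / 2).filter
          fun j => α j ≠ 0).card = (k + 1) / 2 ∧
      ((Finset.univ.filter fun j : Fin n => ¬ ((j - i : Fin n) : ℕ) < (n + 1) / 2).filter
          fun j => α j ≠ 0).card = k / 2 := by
  classical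
  haveI : NeZero n := ⟨hn.ne'⟩
  set m : ℕ := (n + 1) / 2 with hm
  -- the windowed count
  set A : Fin n → Finset (Fin n) :=
    fun i => Finset.univ.filter fun j : Fin n => ((j - i : Fin n) : ℕ) < m ∧ α j ≠ 0 with hA
  set f : Fin n → ℕ := fun i => (A i).card with hf
  -- reduce the goal to finding i with f i = (k+1)/2
  have hk : k ≤ n := by
    rw [← hw]
    exact (Finset.card_filter_le _ _).trans (by simp)
  have hpart : ∀ i : Fin n,
      f i + ((Finset.univ.filter fun j : Fin n => ¬ ((j - i : Fin n) : ℕ) < m).filter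
        fun j => α j ≠ 0).card = k := by
    intro i
    rw [← hw]
    have h1 : A i = (Finset.univ.filter fun j : Fin n => α j ≠ 0).filter
        (fun j => ((j - i : Fin n) : ℕ) < m) := by
      simp [hA, Finset.filter_filter, and_comm]
    have h2 : ((Finset.univ.filter fun j : Fin n => ¬ ((j - i : Fin n) : ℕ) < m).filter
        fun j => α j ≠ 0) = (Finset.univ.filter fun j : Fin n => α j ≠ 0).filter
        (fun j => ¬ ((j - i : Fin n) : ℕ) < m) := by
      rw [Finset.filter_filter, Finset.filter_filter]
      exact Finset.filter_congr (by intro x _; tauto)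
    simp only [hf]
    rw [h1, h2]
    exact Finset.card_filter_add_card_filter_not _
  suffices hexists : ∃ i : Fin n, f i = (k + 1) / 2 by
    obtain ⟨i, hi⟩ := hexists
    refine ⟨i, ?_, ?_⟩
    · rw [Finset.filter_filter]
      exact hi
    · have := hpart i
      omega
  -- trivial case n = 1
  rcases Nat.lt_or_ge n 2 with h1 | hn2
  · have hn1 : n = 1 := by omega
    subst hn1
    refine ⟨0, ?_⟩
    have hA0 : A 0 = Finset.univ.filter fun j : Fin 1 => α j ≠ 0 := by
      apply Finset.filter_congr
      intro x _
      simp only [hm]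
      constructor
      · tauto
      · intro h; exact ⟨by omega, h⟩
    have : f 0 = k := by rw [hf]; simp only [hA0, hw]
    have : k ≤ 1 := by omega
    omega
  -- now n ≥ 2, so m < n
  have hmn : m < n := by omega
  have hm1 : 1 ≤ m := by omega
  have hn2m : n ≤ 2 * m := by omega
  have h2mn : 2 * m ≤ n + 1 := by omega
  have hmval : ((m : Fin n) : ℕ) = m := by
    rw [Fin.val_natCast]; exact Nat.mod_eq_of_lt hmn
  have h1val : ((1 : Fin n) : ℕ) = 1 := by
    have : (1 : Fin n) = ((1 : ℕ) : Fin n) := by norm_cast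
    rw [this, Fin.val_natCast]; exact Nat.mod_eq_of_lt (by omega)
  -- key element facts
  have hsub1 : ∀ i j : Fin n, ((j - (i + 1) : Fin n) : ℕ) =
      if 1 ≤ ((j - i : Fin n) : ℕ) then ((j - i : Fin n) : ℕ) - 1 else n - 1 := by
    intro i j
    have : (j - (i + 1) : Fin n) = (j - i) - 1 := by ring
    rw [this, fin_sub_val hn, h1val]
    have := (j - i).isLt
    split_ifs <;> omega
  have hsubm : ∀ i j : Fin n, ((j - (i + (m : Fin n)) : Fin n) : ℕ) =
      if m ≤ ((j - i : Fin n) : ℕ) then ((j - i : Fin n) : ℕ) - m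
      else ((j - i : Fin n) : ℕ) + n - m := by
    intro i j
    have : (j - (i + (m : Fin n)) : Fin n) = (j - i) - (m : Fin n) := by ring
    rw [this, fin_sub_val hn, hmval]
  have heqi : ∀ i j : Fin n, ((j - i : Fin n) : ℕ) = 0 ↔ j = i := by
    intro i j
    rw [← sub_eq_zero (a := j) (b := i)]
    exact Fin.val_eq_zero_iff
  have heqm : ∀ i j : Fin n, ((j - i : Fin n) : ℕ) = m ↔ j = i + (m : Fin n) := by
    intro i j
    constructor
    · intro h
      have : (j - i : Fin n) = (m : Fin n) := Fin.ext (by rw [h, hmval])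
      rw [sub_eq_iff_eq_add] at this
      rw [this]; ring
    · intro h
      subst h
      have : (i + (m : Fin n) - i : Fin n) = (m : Fin n) := by ring
      rw [this, hmval]
  have hlt : ∀ j i : Fin n, ((j - i : Fin n) : ℕ) < n := fun j i => (j - i).isLt
  -- step bounds
  have step_up : ∀ i : Fin n, f (i + 1) ≤ f i + 1 := by
    intro i
    have hsub : A (i + 1) ⊆ A i ∪ {i + (m : Fin n)} := by
      intro j hj
      simp only [hA, Finset.mem_filter, Finset.mem_univ, true_and] at hj
      simp only [Finset.mem_union, hA, Finset.mem_filter, Finset.mem_univ, true_and,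
        Finset.mem_singleton]
      obtain ⟨hj1, hj2⟩ := hj
      rw [hsub1 i j] at hj1
      have hd := hlt j i
      by_cases hc : ((j - i : Fin n) : ℕ) = m
      · right; exact (heqm i j).mp hc
      · left
        refine ⟨?_, hj2⟩
        split_ifs at hj1 <;> omega
    calc f (i + 1) ≤ (A i ∪ {i + (m : Fin n)}).card := Finset.card_le_card hsub
      _ ≤ f i + 1 := by
          refine (Finset.card_union_le _ _).trans ?_
          simp [hf]
  have step_down : ∀ i : Fin n, f i ≤ f (i + 1) + 1 := by
    intro i
    have hsub : A i ⊆ A (i + 1) ∪ {i} := by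
      intro j hj
      simp only [hA, Finset.mem_filter, Finset.mem_univ, true_and] at hj
      simp only [Finset.mem_union, hA, Finset.mem_filter, Finset.mem_univ, true_and,
        Finset.mem_singleton]
      obtain ⟨hj1, hj2⟩ := hj
      by_cases hc : ((j - i : Fin n) : ℕ) = 0
      · right; exact (heqi i j).mp hc
      · left
        refine ⟨?_, hj2⟩
        rw [hsub1 i j]
        split_ifs <;> omega
    calc f i ≤ (A (i + 1) ∪ {i}).card := Finset.card_le_card hsub
      _ ≤ f (i + 1) + 1 := by
          refine (Finset.card_union_le _ _).trans ?_
          simp [hf]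
  -- pairing bounds at i = 0
  have cover : k ≤ f 0 + f ((m : Fin n)) := by
    have hsub : (Finset.univ.filter fun j : Fin n => α j ≠ 0) ⊆ A 0 ∪ A ((m : Fin n)) := by
      intro j hj
      simp only [Finset.mem_filter, Finset.mem_univ, true_and] at hj
      simp only [Finset.mem_union, hA, Finset.mem_filter, Finset.mem_univ, true_and]
      have hd := hlt j 0
      by_cases hc : ((j - 0 : Fin n) : ℕ) < m
      · left; exact ⟨hc, hj⟩
      · right
        refine ⟨?_, hj⟩
        have : ((m : Fin n) : Fin n) = (0 : Fin n) + (m : Fin n) := by ring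
        rw [this, hsubm 0 j]
        split_ifs <;> omega
    calc k = (Finset.univ.filter fun j : Fin n => α j ≠ 0).card := hw.symm
      _ ≤ (A 0 ∪ A ((m : Fin n))).card := Finset.card_le_card hsub
      _ ≤ f 0 + f ((m : Fin n)) := Finset.card_union_le _ _
  have upper : f 0 + f ((m : Fin n)) ≤ k + 1 := by
    have hsubU : A 0 ∪ A ((m : Fin n)) ⊆ Finset.univ.filter fun j : Fin n => α j ≠ 0 := by
      intro j hj
      simp only [Finset.mem_union, hA, Finset.mem_filter, Finset.mem_univ, true_and] at hj
      simp only [Finset.mem_filter, Finset.mem_univ, true_and]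
      tauto
    have hsubI : A 0 ∩ A ((m : Fin n)) ⊆ {(0 : Fin n)} := by
      intro j hj
      simp only [Finset.mem_inter, hA, Finset.mem_filter, Finset.mem_univ, true_and] at hj
      simp only [Finset.mem_singleton]
      obtain ⟨⟨hj1, -⟩, ⟨hj2, -⟩⟩ := hj
      have : ((m : Fin n) : Fin n) = (0 : Fin n) + (m : Fin n) := by ring
      rw [this, hsubm 0 j] at hj2
      have hd := hlt j 0
      have : ((j - 0 : Fin n) : ℕ) = 0 := by split_ifs at hj2 <;> omega
      have := (heqi 0 j).mp this
      exact this
    have h1 : (A 0 ∪ A ((m : Fin n))).card ≤ k := by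
      rw [← hw]; exact Finset.card_le_card hsubU
    have h2 : (A 0 ∩ A ((m : Fin n))).card ≤ 1 := by
      calc (A 0 ∩ A ((m : Fin n))).card ≤ ({(0 : Fin n)} : Finset (Fin n)).card :=
            Finset.card_le_card hsubI
        _ = 1 := Finset.card_singleton _
    have := Finset.card_union_add_card_inter (A 0) (A ((m : Fin n)))
    simp only [hf]
    omega
  -- find a, b with f a ≤ (k+1)/2 ≤ f b
  set t : ℕ := (k + 1) / 2 with ht
  obtain ⟨a, b, hab⟩ : ∃ a b : Fin n, f a ≤ t ∧ t ≤ f b := by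
    rcases le_total (f 0) (f ((m : Fin n))) with h | h
    · exact ⟨0, (m : Fin n), by omega, by omega⟩
    · exact ⟨(m : Fin n), 0, by omega, by omega⟩
  -- discrete IVT along the cycle from a to b
  have gstep : ∀ s : ℕ, f (a + ((s + 1 : ℕ) : Fin n)) ≤ f (a + (s : Fin n)) + 1 := by
    intro s
    have : a + ((s + 1 : ℕ) : Fin n) = (a + (s : Fin n)) + 1 := by
      push_cast
      ring
    rw [this]
    exact step_up _
  have hgN : a + (((b - a : Fin n) : ℕ) : Fin n) = b := by
    rw [Fin.cast_val_eq_self]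
    ring
  obtain ⟨s, hs⟩ := ivt_aux (fun s => f (a + (s : Fin n))) gstep t ((b - a : Fin n) : ℕ)
    (by simpa using hab.1)
    (by show t ≤ f (a + (((b - a : Fin n) : ℕ) : Fin n)); rw [hgN]; exact hab.2)
  exact ⟨a + (s : Fin n), hs⟩
end

section
/- For any function f : F_q^n → F_q, any p^(ℓ-1) distinct nonzero elements c_1, ..., c_{p^{ℓ-1}} of F_q, and any coordinate i relevant for f, there exists j ∈ [p^{ℓ-1}] such that i is also relevant for the function Tr(c_j · f) : F_q^n → F_p. -/
/-- For any `f : F_q^n → F_q` (where `q = p^ℓ`), any `p^(ℓ-1)` distinct nonzero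
elements `c_1, …, c_{p^{ℓ-1}}` of `F_q`, and any coordinate `i` relevant for `f`, there is `j`
such that `i` is relevant for `Tr(c_j · f) : F_q^n → F_p`. Relevance of `i` for `g` means there
are inputs `x, y` differing only at coordinate `i` with `g x ≠ g y`. -/
theorem stmt_1 (p ℓ n : ℕ) [Fact p.Prime] {F : Type*} [Field F] [Fintype F]
    [Algebra (ZMod p) F] (hq : Fintype.card F = p ^ ℓ)
    (f : (Fin n → F) → F) (c : Fin (p ^ (ℓ - 1)) → F)
    (hinj : Function.Injective c) (hc0 : ∀ j, c j ≠ 0)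
    (i : Fin n)
    (hrel : ∃ x y : Fin n → F, (∀ j, j ≠ i → x j = y j) ∧ f x ≠ f y) :
    ∃ j : Fin (p ^ (ℓ - 1)), ∃ x y : Fin n → F, (∀ j', j' ≠ i → x j' = y j') ∧
      Algebra.trace (ZMod p) F (c j * f x) ≠ Algebra.trace (ZMod p) F (c j * f y) := by
  classical
  obtain ⟨x, y, hxy, hne⟩ := hrel
  set a := f x - f y with ha
  have ha0 : a ≠ 0 := sub_ne_zero.mpr hne
  haveI : FiniteDimensional (ZMod p) F := Module.Finite.of_finite
  haveI : Algebra.IsSeparable (ZMod p) F := inferInstance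
  by_contra h
  push_neg at h
  -- the linear functional ψ : c ↦ Tr(c * a)
  let ψ : F →ₗ[ZMod p] ZMod p :=
    (Algebra.trace (ZMod p) F).comp (LinearMap.mulRight (ZMod p) a)
  have hψ : ∀ z : F, ψ z = Algebra.trace (ZMod p) F (z * a) := fun z => rfl
  -- ψ is nonzero
  obtain ⟨b, hb⟩ : ∃ b : F, Algebra.trace (ZMod p) F (a * b) ≠ 0 := by
    have htr := (traceForm_nondegenerate (ZMod p) F).1 a
    simp_rw [Algebra.traceForm_apply] at htr
    by_contra! hf
    exact ha0 (htr hf)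
  have hψb : ψ b ≠ 0 := by rw [hψ, mul_comm]; exact hb
  -- ψ is surjective
  have hsurj : Function.Surjective ψ := by
    intro z
    refine ⟨(z * (ψ b)⁻¹) • b, ?_⟩
    rw [map_smul, smul_eq_mul, mul_assoc, inv_mul_cancel₀ hψb, mul_one]
  -- finrank F = ℓ
  have hfr : Module.finrank (ZMod p) F = ℓ := by
    have := Module.card_eq_pow_finrank (K := ZMod p) (V := F)
    rw [ZMod.card, hq] at this
    exact (Nat.pow_right_injective (Fact.out : p.Prime).two_le this.symm)
  -- finrank of kernel = ℓ - 1
  have hrange : LinearMap.range ψ = ⊤ := LinearMap.range_eq_top.mpr hsurj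
  have hker : Module.finrank (ZMod p) (LinearMap.ker ψ) = ℓ - 1 := by
    have h1 := LinearMap.finrank_range_add_finrank_ker ψ
    rw [hrange, finrank_top, Module.finrank_self, hfr] at h1
    omega
  have hcard : Fintype.card (LinearMap.ker ψ) = p ^ (ℓ - 1) := by
    rw [Module.card_eq_pow_finrank (K := ZMod p) (V := LinearMap.ker ψ), ZMod.card, hker]
  -- all c j and 0 are in the kernel
  have hmem : ∀ j, c j ∈ LinearMap.ker ψ := by
    intro j
    rw [LinearMap.mem_ker, hψ, ha, mul_sub, map_sub, sub_eq_zero]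
    exact h j x y hxy
  -- counting contradiction
  let s : Finset F := insert 0 (Finset.univ.image c)
  have hs0 : (0 : F) ∉ Finset.univ.image c := by
    simp only [Finset.mem_image]
    rintro ⟨j, -, hj⟩
    exact hc0 j hj
  have hscard : s.card = p ^ (ℓ - 1) + 1 := by
    rw [Finset.card_insert_of_notMem hs0,
      Finset.card_image_of_injective _ hinj, Finset.card_univ, Fintype.card_fin]
  have hsub : ∀ z ∈ s, z ∈ LinearMap.ker ψ := by
    intro z hz
    rcases Finset.mem_insert.mp hz with rfl | hz
    · exact (LinearMap.ker ψ).zero_mem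
    · obtain ⟨j, -, rfl⟩ := Finset.mem_image.mp hz
      exact hmem j
  have hle : s.card ≤ Fintype.card (LinearMap.ker ψ) := by
    rw [← Fintype.card_coe s]
    apply Fintype.card_le_of_injective (fun z : s => (⟨z.1, hsub z.1 z.2⟩ : LinearMap.ker ψ))
    intro u v huv
    exact Subtype.ext (Subtype.mk_eq_mk.mp huv)
  rw [hscard, hcard] at hle
  omega
end

section
/- Let X be a random variable taking values in F_q with |E[e(X)]| ≥ ρ for some 0 ≤ ρ ≤ 1. Then there exists a ∈ F_q such that Pr[X = a] ≥ 1/q + ρ/q². -/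
/-- The additive character `e(a) = exp(2πi·Tr(a)/p)` of a finite field of characteristic `p`. -/
noncomputable def ec (p : ℕ) {F : Type*} [Field F] [Algebra (ZMod p) F] (a : F) : ℂ :=
  Complex.exp (2 * Real.pi * Complex.I * ((Algebra.trace (ZMod p) F a).val : ℂ) / p)

section aux
variable (p : ℕ) [Fact p.Prime] {F : Type*} [Field F] [Fintype F] [Algebra (ZMod p) F]

lemma ec_eq (a : F) : ec p a = ZMod.stdAddChar (Algebra.trace (ZMod p) F a) := by
  rw [ZMod.stdAddChar_apply, ZMod.toCircle_apply, ec]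

lemma abs_ec (a : F) : ‖ec p a‖ = 1 := by
  rw [ec, Complex.norm_exp]
  have : (2 * Real.pi * Complex.I * ((Algebra.trace (ZMod p) F a).val : ℂ) / p).re = 0 := by
    simp [Complex.div_re, -ZMod.natCast_val]
  rw [this, Real.exp_zero]

lemma sum_ec : ∑ x : F, ec p x = 0 := by
  have : Module.Finite (ZMod p) F := inferInstance
  obtain ⟨x0, hx0⟩ := Algebra.trace_surjective (ZMod p) F 1
  let ψ : AddChar F ℂ := ZMod.stdAddChar.compAddMonoidHom
    (Algebra.trace (ZMod p) F).toAddMonoidHom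
  have hψ : ψ ≠ 1 := by
    intro h
    have : ψ x0 = 1 := by rw [h]; rfl
    rw [AddChar.compAddMonoidHom_apply] at this
    simp only [LinearMap.toAddMonoidHom_coe, LinearMap.coe_mk] at this
    rw [show ((Algebra.trace (ZMod p) F) x0) = 1 from hx0] at this
    have h0 : ZMod.stdAddChar (0 : ZMod p) = 1 := by
      simpa using (ZMod.stdAddChar (N := p)).map_zero_eq_one
    have := ZMod.injective_stdAddChar (this.trans h0.symm)
    exact one_ne_zero this
  calc ∑ x, ec p x = ∑ x, ψ x := by
        refine Finset.sum_congr rfl fun x _ => ?_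
        rw [ec_eq]
        rfl
    _ = 0 := AddChar.sum_eq_zero_of_ne_one hψ

end aux

lemma abs_eq_two_max (a : ℝ) : |a| = 2 * max a 0 - a := by
  rcases le_or_gt 0 a with h | h
  · rw [abs_of_nonneg h, max_eq_left h]; ring
  · rw [abs_of_neg h, max_eq_right h.le]; ring

/-- If `X` is a random variable on `F_q` (distribution `μ`) with `|E[e(X)]| ≥ ρ`
for some `0 ≤ ρ ≤ 1`, then there exists `a ∈ F_q` with `Pr[X = a] ≥ 1/q + ρ/q²`. -/
theorem stmt_6 (p ℓ : ℕ) [Fact p.Prime] {F : Type*} [Field F] [Fintype F]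
    [Algebra (ZMod p) F] (hq : Fintype.card F = p ^ ℓ)
    (μ : F → ℝ) (h0 : ∀ x, 0 ≤ μ x) (h1 : ∑ x, μ x = 1)
    (ρ : ℝ) (hρ0 : 0 ≤ ρ) (hρ1 : ρ ≤ 1)
    (hcor : ρ ≤ ‖∑ x, (μ x : ℂ) * ec p x‖) :
    ∃ a : F, 1 / (Fintype.card F : ℝ) + ρ / (Fintype.card F : ℝ) ^ 2 ≤ μ a := by
  by_contra hcon
  push_neg at hcon
  set q : ℝ := (Fintype.card F : ℝ) with hqdef
  have hq2 : (2:ℝ) ≤ q := by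
    have h' : 2 ≤ Fintype.card F := Fintype.one_lt_card
    rw [hqdef]
    exact_mod_cast h'
  have hq0 : (0:ℝ) < q := by linarith
  have hne : (Finset.univ : Finset F).Nonempty := Finset.univ_nonempty
  have hsumconst : ∀ c : ℝ, ∑ _x : F, c = q * c := by
    intro c
    rw [Finset.sum_const, nsmul_eq_mul]
    rfl
  rcases eq_or_lt_of_le hρ0 with hρ | hρ
  · have hlt : ∑ x : F, μ x < ∑ _x : F, 1/q := by
      refine Finset.sum_lt_sum_of_nonempty hne fun x _ => ?_
      have := hcon x
      rw [← hρ] at this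
      simpa using this
    rw [h1, hsumconst] at hlt
    rw [mul_one_div, div_self (ne_of_gt hq0)] at hlt
    exact lt_irrefl _ hlt
  · -- main case ρ > 0
    have h2 : ∑ x, (μ x : ℂ) * ec p x = ∑ x, ((μ x - 1/q : ℝ) : ℂ) * ec p x := by
      rw [← sub_eq_zero, ← Finset.sum_sub_distrib]
      have : ∀ x : F, (μ x : ℂ) * ec p x - ((μ x - 1/q : ℝ) : ℂ) * ec p x
          = ((1/q : ℝ) : ℂ) * ec p x := by
        intro x; push_cast; ring
      rw [Finset.sum_congr rfl fun x _ => this x, ← Finset.mul_sum, sum_ec p, mul_zero]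
    have habs : ‖∑ x, (μ x : ℂ) * ec p x‖ ≤ ∑ x : F, |μ x - 1/q| := by
      rw [h2]
      refine le_trans (norm_sum_le _ _) (le_of_eq ?_)
      refine Finset.sum_congr rfl fun x _ => ?_
      rw [norm_mul, abs_ec p, mul_one, Complex.norm_real, Real.norm_eq_abs]
    have hsum0 : ∑ x : F, (μ x - 1/q) = 0 := by
      rw [Finset.sum_sub_distrib, h1, hsumconst, mul_one_div, div_self (ne_of_gt hq0)]
      ring
    have hmaxlt : ∑ x : F, max (μ x - 1/q) 0 < ∑ _x : F, ρ / q^2 := by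
      refine Finset.sum_lt_sum_of_nonempty hne fun x _ => ?_
      refine max_lt (by linarith [hcon x]) (by positivity)
    rw [hsumconst] at hmaxlt
    have habs2 : ∑ x : F, |μ x - 1/q| = 2 * ∑ x : F, max (μ x - 1/q) 0 := by
      rw [Finset.sum_congr rfl fun x _ => abs_eq_two_max (μ x - 1/q),
        Finset.sum_sub_distrib, hsum0, ← Finset.mul_sum]
      ring
    have hchain : ρ < 2 * (q * (ρ / q^2)) := by
        calc ρ ≤ ‖∑ x, (μ x : ℂ) * ec p x‖ := hcor
          _ ≤ ∑ x : F, |μ x - 1/q| := habs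
          _ = 2 * ∑ x : F, max (μ x - 1/q) 0 := habs2
          _ < 2 * (q * (ρ / q^2)) := by linarith
    have heq : 2 * (q * (ρ / q^2)) = 2 * ρ / q := by
      field_simp
    rw [heq, lt_div_iff₀ hq0] at hchain
    nlinarith
end

section
/- For any subset D ⊆ [n] with |D| ≤ k, any α supported on D with α ≠ 0, and any m ≥ k, the probability over a uniformly random matrix A ∈ F_q^{m×n} that Aα = 1^m while Aβ ≠ 1^m for every β ∈ F_q^D \ {α} is at least (q^{m−k} − 1)/q^{2m−k}. -/
open Finset

private lemma card_fiber_mul {F V W : Type*} [Field F] [AddCommGroup V] [Module F V]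
    [AddCommGroup W] [Module F W] [Fintype V] [Fintype W] [DecidableEq W]
    (f : V →ₗ[F] W) (hf : Function.Surjective f) (w : W) :
    (Finset.univ.filter fun v => f v = w).card * Fintype.card W = Fintype.card V := by
  classical
  have h1 : ∀ w' : W, (Finset.univ.filter fun v => f v = w').card
      = (Finset.univ.filter fun v => f v = w).card := by
    intro w'
    obtain ⟨d, hd⟩ := hf (w' - w)
    refine Finset.card_bij' (fun v _ => v - d) (fun v _ => v + d) ?_ ?_ ?_ ?_ <;>
      intro v hv <;>
      simp only [Finset.mem_filter, Finset.mem_univ, true_and, map_sub, map_add] at hv ⊢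
    · rw [hv, hd]; abel
    · rw [hv, hd]; abel
    · abel
    · abel
  have h2 : Fintype.card V = ∑ w' : W, (Finset.univ.filter fun v => f v = w').card := by
    rw [← Finset.card_univ]
    exact Finset.card_eq_sum_card_fiberwise (fun v _ => Finset.mem_univ _)
  rw [h2]
  simp [h1, Finset.sum_const, Finset.card_univ, mul_comm]

private lemma exists_dual_pair' {F V : Type*} [Field F] [AddCommGroup V] [Module F V]
    {x y : V} (hx : x ∉ Submodule.span F {y}) :
    ∃ f : V →ₗ[F] F, f x = 1 ∧ f y = 0 := by
  obtain ⟨f, hfx, hfy⟩ := (Submodule.span F {y}).exists_dual_map_eq_bot_of_notMem hx inferInstance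
  have hy0 : f y = 0 := by
    have : f y ∈ (Submodule.span F {y}).map f :=
      Submodule.mem_map_of_mem (Submodule.mem_span_singleton_self y)
    rw [hfy] at this; simpa using this
  exact ⟨(f x)⁻¹ • f, by simp [inv_mul_cancel₀ hfx], by simp [hy0]⟩

/-- For any `D ⊆ [n]` with `|D| ≤ k`, any nonzero `α` supported on `D`, and any
`m ≥ k`, the probability over uniform `A ∈ F_q^{m×n}` that `Aα = 1^m` while `Aβ ≠ 1^m` for
every `β ∈ F_q^D \ {α}` is at least `(q^{m−k} − 1)/q^{2m−k}`. -/
theorem stmt_11 {F : Type*} [Field F] [Fintype F] [DecidableEq F] {n k m : ℕ}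
    (hm : k ≤ m) (D : Finset (Fin n)) (hD : D.card ≤ k)
    (α : Fin n → F) (hα : α ≠ 0) (hsupp : ∀ i, α i ≠ 0 → i ∈ D) :
    ((Fintype.card F : ℝ) ^ (m - k) - 1) / (Fintype.card F : ℝ) ^ (2 * m - k) ≤
      ((Finset.univ.filter fun A : Matrix (Fin m) (Fin n) F =>
          A.mulVec α = (fun _ => 1) ∧
          ∀ β : Fin n → F, (∀ i, β i ≠ 0 → i ∈ D) → β ≠ α →
            A.mulVec β ≠ fun _ => 1).card : ℝ) /
        (Fintype.card (Matrix (Fin m) (Fin n) F) : ℝ) := by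
  classical
  set N := Fintype.card F with hNdef
  have hN : 0 < N := Fintype.card_pos
  have hN1 : 1 ≤ N := hN
  -- m ≠ 0
  have hm0 : m ≠ 0 := by
    rintro rfl
    have hk0 : k = 0 := Nat.le_zero.mp hm
    apply hα
    funext i
    by_contra hi
    have : i ∈ D := hsupp i hi
    have : D.card ≠ 0 := Finset.card_ne_zero_of_mem this
    omega
  have hrep : ∀ (h : (Fin n → F) →ₗ[F] F) (x : Fin n → F),
      h x = ∑ j, x j * h (fun j' => if j = j' then 1 else 0) := by
    intro h x
    rw [LinearMap.pi_apply_eq_sum_univ h x]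
    simp [smul_eq_mul]
  set E : Finset (Matrix (Fin m) (Fin n) F) :=
    Finset.univ.filter fun A : Matrix (Fin m) (Fin n) F =>
      A.mulVec α = (fun _ => 1) ∧
      ∀ β : Fin n → F, (∀ i, β i ≠ 0 → i ∈ D) → β ≠ α →
        A.mulVec β ≠ fun _ => 1 with hEdef
  set G : Finset (Matrix (Fin m) (Fin n) F) :=
    Finset.univ.filter fun A => A.mulVec α = (fun _ => 1) with hGdef
  set S : Finset (Fin n → F) :=
    Finset.univ.filter (fun γ => γ ≠ 0 ∧ ∀ i, γ i ≠ 0 → i ∈ D) with hSdef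
  set B : (Fin n → F) → Finset (Matrix (Fin m) (Fin n) F) :=
    fun γ => Finset.univ.filter fun A =>
      A.mulVec α = (fun _ => 1) ∧ A.mulVec γ = 0 with hBdef
  -- cardinalities of spaces
  have cardFun : Fintype.card (Fin m → F) = N ^ m := by simp [hNdef]
  have cardMat : Fintype.card (Matrix (Fin m) (Fin n) F) = N ^ (m * n) := by
    calc Fintype.card (Matrix (Fin m) (Fin n) F)
        = Fintype.card (Fin m → Fin n → F) := (Fintype.card_congr Matrix.of).symm
      _ = (N ^ n) ^ m := by simp [hNdef]
      _ = N ^ (m * n) := by rw [← pow_mul, mul_comm]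
  -- the linear map A ↦ A.mulVec α is surjective
  have hG : G.card * N ^ m = N ^ (m * n) := by
    let Φ : Matrix (Fin m) (Fin n) F →ₗ[F] (Fin m → F) :=
      { toFun := fun A => A.mulVec α
        map_add' := fun A B => Matrix.add_mulVec A B α
        map_smul' := fun c A => Matrix.smul_mulVec c A α }
    have hΦ : Function.Surjective Φ := by
      obtain ⟨j, hj⟩ := Function.ne_iff.mp hα
      intro t
      refine ⟨fun i j' => if j' = j then t i * (α j)⁻¹ else 0, ?_⟩
      funext i
      show ∑ j', (if j' = j then t i * (α j)⁻¹ else 0) * α j' = t i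
      rw [Finset.sum_eq_single j]
      · simp [inv_mul_cancel₀ hj, mul_assoc]
      · intro b _ hb; simp [hb]
      · intro h; exact absurd (Finset.mem_univ j) h
    have := card_fiber_mul Φ hΦ (fun _ => (1 : F))
    rw [cardFun, cardMat] at this
    rw [← this]
    congr 1
  -- each bad event is small
  have hB : ∀ γ ∈ S, (B γ).card * N ^ (2 * m) ≤ N ^ (m * n) := by
    intro γ hγS
    rw [hSdef, Finset.mem_filter] at hγS
    obtain ⟨-, hγ0, hγD⟩ := hγS
    by_cases hspan : γ ∈ Submodule.span F {α}
    · -- then B γ is empty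
      obtain ⟨c, hc⟩ := Submodule.mem_span_singleton.mp hspan
      have hc0 : c ≠ 0 := by rintro rfl; simp at hc; exact hγ0 hc.symm
      have : B γ = ∅ := by
        apply Finset.eq_empty_of_forall_notMem
        intro A hA
        rw [hBdef, Finset.mem_filter] at hA
        obtain ⟨-, h1, h2⟩ := hA
        rw [← hc, Matrix.mulVec_smul, h1] at h2
        have := congrFun h2 ⟨0, Nat.pos_of_ne_zero hm0⟩
        simp at this
        exact hc0 this
      rw [this]
      simp
    · -- α, γ "independent": exact count
      have hαspan : α ∉ Submodule.span F {γ} := by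
        intro h
        obtain ⟨c, hc⟩ := Submodule.mem_span_singleton.mp h
        have hc0 : c ≠ 0 := by rintro rfl; simp at hc; exact hα hc.symm
        apply hspan
        rw [Submodule.mem_span_singleton]
        exact ⟨c⁻¹, by rw [← hc, smul_smul, inv_mul_cancel₀ hc0, one_smul]⟩
      obtain ⟨f, hfα, hfγ⟩ := exists_dual_pair' hαspan
      obtain ⟨g, hgγ, hgα⟩ := exists_dual_pair' hspan
      let Ψ : Matrix (Fin m) (Fin n) F →ₗ[F] (Fin m → F) × (Fin m → F) :=
        { toFun := fun A => (A.mulVec α, A.mulVec γ)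
          map_add' := fun A B => by
            simp [Matrix.add_mulVec, Prod.ext_iff]
          map_smul' := fun c A => by
            simp [Matrix.smul_mulVec, Prod.ext_iff] }
      have hΨ : Function.Surjective Ψ := by
        rintro ⟨s, t⟩
        refine ⟨fun i j => s i * f (fun j' => if j = j' then 1 else 0)
          + t i * g (fun j' => if j = j' then 1 else 0), ?_⟩
        have calc1 : ∀ (x : Fin n → F) (i : Fin m),
            (∑ j, (s i * f (fun j' => if j = j' then 1 else 0)
              + t i * g (fun j' => if j = j' then 1 else 0)) * x j)
            = s i * f x + t i * g x := by
          intro x i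
          rw [hrep f x, hrep g x, Finset.mul_sum, Finset.mul_sum,
            ← Finset.sum_add_distrib]
          exact Finset.sum_congr rfl (fun j _ => by ring)
        refine Prod.ext (funext fun i => ?_) (funext fun i => ?_)
        · show (∑ j, (s i * f (fun j' => if j = j' then 1 else 0)
            + t i * g (fun j' => if j = j' then 1 else 0)) * α j) = s i
          rw [calc1 α i, hfα, hgα]; ring
        · show (∑ j, (s i * f (fun j' => if j = j' then 1 else 0)
            + t i * g (fun j' => if j = j' then 1 else 0)) * γ j) = t i
          rw [calc1 γ i, hfγ, hgγ]; ring
      have hcardP : Fintype.card ((Fin m → F) × (Fin m → F)) = N ^ (2 * m) := by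
        rw [Fintype.card_prod, cardFun, ← pow_add, two_mul]
      have := card_fiber_mul Ψ hΨ ((fun _ => (1 : F)), 0)
      rw [hcardP, cardMat] at this
      rw [← this]
      apply Nat.mul_le_mul_right
      apply Finset.card_le_card
      intro A hA
      rw [hBdef, Finset.mem_filter] at hA
      simp only [Finset.mem_filter, Finset.mem_univ, true_and]
      exact Prod.ext hA.2.1 hA.2.2
  -- the union bound cover
  have cover : G ⊆ E ∪ S.biUnion B := by
    intro A hA
    rw [hGdef, Finset.mem_filter] at hA
    obtain ⟨-, hA1⟩ := hA
    by_cases hAE : A ∈ E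
    · exact Finset.mem_union_left _ hAE
    · apply Finset.mem_union_right
      rw [hEdef, Finset.mem_filter] at hAE
      push_neg at hAE
      obtain ⟨β, hβD, hβα, hβ1⟩ := hAE (Finset.mem_univ A) hA1
      rw [Finset.mem_biUnion]
      refine ⟨β - α, ?_, ?_⟩
      · rw [hSdef, Finset.mem_filter]
        refine ⟨Finset.mem_univ _, sub_ne_zero.mpr hβα, ?_⟩
        intro i hi
        by_cases hβi : β i = 0
        · by_cases hαi : α i = 0
          · exact absurd (by simp [Pi.sub_apply, hβi, hαi]) hi
          · exact hsupp i hαi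
        · exact hβD i hβi
      · rw [hBdef, Finset.mem_filter]
        refine ⟨Finset.mem_univ _, hA1, ?_⟩
        rw [Matrix.mulVec_sub, hβ1, hA1]
        simp
  have hGle : G.card ≤ E.card + ∑ γ ∈ S, (B γ).card :=
    calc G.card ≤ (E ∪ S.biUnion B).card := Finset.card_le_card cover
      _ ≤ E.card + (S.biUnion B).card := Finset.card_union_le _ _
      _ ≤ E.card + ∑ γ ∈ S, (B γ).card := by
          gcongr
          exact Finset.card_biUnion_le
  -- bound on |S|
  have hS : S.card ≤ N ^ k - 1 := by
    have h1 : S.card ≤ N ^ D.card - 1 := by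
      have : S.card ≤ (Finset.univ.filter fun f : {x // x ∈ D} → F => f ≠ 0).card := by
        apply Finset.card_le_card_of_injOn (fun γ => fun i : {x // x ∈ D} => γ i)
        · intro γ hγ
          have hγ : γ ∈ S := Finset.mem_coe.mp hγ
          rw [hSdef, Finset.mem_filter] at hγ
          obtain ⟨-, hγ0, hγD⟩ := hγ
          simp only [Finset.mem_coe, Finset.mem_filter, Finset.mem_univ, true_and]
          obtain ⟨i, hi⟩ := Function.ne_iff.mp hγ0
          intro h0
          exact hi (congrFun h0 ⟨i, hγD i hi⟩)
        · intro γ₁ h₁ γ₂ h₂ hfe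
          have h₁' := Finset.mem_coe.mp h₁
          have h₂' := Finset.mem_coe.mp h₂
          rw [hSdef, Finset.mem_filter] at h₁' h₂'
          funext i
          by_cases hiD : i ∈ D
          · exact congrFun hfe ⟨i, hiD⟩
          · have e1 : γ₁ i = 0 := by
              by_contra h; exact hiD (h₁'.2.2 i h)
            have e2 : γ₂ i = 0 := by
              by_contra h; exact hiD (h₂'.2.2 i h)
            rw [e1, e2]
      calc S.card ≤ _ := this
        _ = N ^ D.card - 1 := by
          rw [Finset.filter_ne', Finset.card_erase_of_mem (Finset.mem_univ _),
            Finset.card_univ]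
          congr 1
          simp [hNdef]
    calc S.card ≤ N ^ D.card - 1 := h1
      _ ≤ N ^ k - 1 := Nat.sub_le_sub_right (Nat.pow_le_pow_right hN1 hD) 1
  -- key natural-number inequality
  have h1k : N ^ k ≤ N ^ m := Nat.pow_le_pow_right hN1 hm
  have h11 : 1 ≤ N ^ k := Nat.one_le_pow _ _ hN
  have key : (N ^ m - N ^ k) * N ^ (m * n) ≤ E.card * N ^ (2 * m) := by
    have big : N ^ (m * n) * N ^ m ≤ E.card * N ^ (2 * m) + (N ^ k - 1) * N ^ (m * n) := by
      calc N ^ (m * n) * N ^ m = G.card * N ^ m * N ^ m := by rw [hG]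
        _ = G.card * N ^ (2 * m) := by rw [mul_assoc, ← pow_add, two_mul]
        _ ≤ (E.card + ∑ γ ∈ S, (B γ).card) * N ^ (2 * m) := Nat.mul_le_mul_right _ hGle
        _ = E.card * N ^ (2 * m) + (∑ γ ∈ S, (B γ).card) * N ^ (2 * m) := add_mul _ _ _
        _ = E.card * N ^ (2 * m) + ∑ γ ∈ S, (B γ).card * N ^ (2 * m) := by
            rw [Finset.sum_mul]
        _ ≤ E.card * N ^ (2 * m) + ∑ _γ ∈ S, N ^ (m * n) := by
            gcongr with γ hγ
            exact hB γ hγ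
        _ = E.card * N ^ (2 * m) + S.card * N ^ (m * n) := by
            rw [Finset.sum_const, smul_eq_mul]
        _ ≤ E.card * N ^ (2 * m) + (N ^ k - 1) * N ^ (m * n) := by
            gcongr
    have h3 : (N ^ m - N ^ k) * N ^ (m * n) + (N ^ k - 1) * N ^ (m * n)
        ≤ E.card * N ^ (2 * m) + (N ^ k - 1) * N ^ (m * n) := by
      calc (N ^ m - N ^ k) * N ^ (m * n) + (N ^ k - 1) * N ^ (m * n)
          = ((N ^ m - N ^ k) + (N ^ k - 1)) * N ^ (m * n) := (add_mul _ _ _).symm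
        _ ≤ N ^ m * N ^ (m * n) := Nat.mul_le_mul_right _ (by omega)
        _ = N ^ (m * n) * N ^ m := mul_comm _ _
        _ ≤ E.card * N ^ (2 * m) + (N ^ k - 1) * N ^ (m * n) := big
    exact le_of_add_le_add_right h3
  -- move to the reals
  set q : ℝ := (N : ℝ) with hqdef
  have hq : (0 : ℝ) < q := by
    rw [hqdef]; exact_mod_cast hN
  have keyR : (q ^ m - q ^ k) * q ^ (m * n) ≤ (E.card : ℝ) * q ^ (2 * m) := by
    have := (Nat.cast_le (α := ℝ)).mpr key
    push_cast [Nat.cast_sub h1k] at this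
    convert this using 2 <;> push_cast <;> ring
  have hMatpos : (0 : ℝ) < (Fintype.card (Matrix (Fin m) (Fin n) F) : ℝ) := by
    exact_mod_cast Fintype.card_pos
  rw [div_le_div_iff₀ (by positivity) hMatpos]
  have hcast : (Fintype.card (Matrix (Fin m) (Fin n) F) : ℝ) = q ^ (m * n) := by
    rw [cardMat]; push_cast; ring
  rw [hcast]
  have hqk : (0 : ℝ) < q ^ k := by positivity
  rw [← mul_le_mul_iff_of_pos_right hqk]
  calc (q ^ (m - k) - 1) * q ^ (m * n) * q ^ k
      = (q ^ (m - k) * q ^ k - q ^ k) * q ^ (m * n) := by ring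
    _ = (q ^ m - q ^ k) * q ^ (m * n) := by
        rw [← pow_add, Nat.sub_add_cancel hm]
    _ ≤ (E.card : ℝ) * q ^ (2 * m) := keyR
    _ = (E.card : ℝ) * q ^ (2 * m - k) * q ^ k := by
        rw [mul_assoc, ← pow_add, Nat.sub_add_cancel (by omega)]
end

section
/- Let f : F_q^n → F_q, A ∈ F_q^{m×n}, a ∈ F_q. Suppose an example (x, b) is generated by sampling y uniformly from F_q^n and z uniformly from F_q^m and setting x = y − Aᵀz, b = f(y) − Σ_j z_j. Then for every fixed x ∈ F_q^n, the conditional expectation E[e(a·b) | x] equals f_A^a(x), the (a,A)-projection of f evaluated at x. -/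
/-- The linear function `χ_α(x) = Σ_i α_i x_i` over `F_q`. -/
def chi {F : Type*} [Field F] {n : ℕ} (α x : Fin n → F) : F := ∑ i, α i * x i

/-- The Fourier coefficient `ĝ(α) = E_x[e(g(x))·conj(e(χ_α(x)))]`. -/
noncomputable def fc (p : ℕ) {F : Type*} [Field F] [Fintype F] [Algebra (ZMod p) F] {n : ℕ}
    (g : (Fin n → F) → F) (α : Fin n → F) : ℂ :=
  (∑ x : Fin n → F, ec p (g x) * (starRingEnd ℂ) (ec p (chi α x))) /
    (Fintype.card (Fin n → F) : ℂ)

section Aux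

set_option linter.unusedSectionVars false

variable (p : ℕ) [Fact p.Prime] {F : Type*} [Field F] [Fintype F] [DecidableEq F]
  [Algebra (ZMod p) F]

/-- `ec` as an additive character. -/
noncomputable def ecChar : AddChar F ℂ :=
  (ZMod.stdAddChar (N := p)).compAddMonoidHom (Algebra.trace (ZMod p) F).toAddMonoidHom

lemma ec_eq_char (c : F) : ec p c = ecChar p c := by
  rw [ecChar, AddChar.compAddMonoidHom_apply, LinearMap.toAddMonoidHom_coe,
    ZMod.stdAddChar_apply, ZMod.toCircle_apply]
  rfl

lemma ec_add (c d : F) : ec p (c + d) = ec p c * ec p d := by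
  simp only [ec_eq_char]; exact AddChar.map_add_eq_mul _ _ _

lemma ec_zero : ec p (0 : F) = 1 := by
  simp only [ec_eq_char]; exact AddChar.map_zero_eq_one _

lemma ec_conj (c : F) : (starRingEnd ℂ) (ec p c) = ec p (-c) := by
  have h2 : ec p (-c) * ec p c = 1 := by
    rw [← ec_add, neg_add_cancel, ec_zero]
  have h1 : (starRingEnd ℂ) (ec p c) = (ec p c)⁻¹ := by
    rw [ec, ← Complex.exp_conj, ← Complex.exp_neg]
    congr 1
    simp only [map_div₀, map_mul, Complex.conj_I, Complex.conj_ofReal, map_ofNat,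
      Complex.conj_natCast]
    ring
  rw [h1]
  exact inv_eq_of_mul_eq_one_left h2

lemma trace_nondeg {v : F} (hv : v ≠ 0) :
    ∃ b : F, Algebra.trace (ZMod p) F (v * b) ≠ 0 := by
  have hchar : CharP F p :=
    charP_of_injective_algebraMap (algebraMap (ZMod p) F).injective p
  have hring : ringChar F = p := ringChar.eq F p
  subst hring
  exact FiniteField.trace_to_zmod_nondegenerate F hv

lemma ec_sum_eq_prod {ι : Type*} (s : Finset ι) (g : ι → F) :
    ec p (∑ i ∈ s, g i) = ∏ i ∈ s, ec p (g i) := by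
  induction s using Finset.cons_induction with
  | empty => simp [ec_zero]
  | cons i s hi ih => rw [Finset.sum_cons, Finset.prod_cons, ec_add, ih]

lemma ec_sum_mul (v : F) :
    ∑ t : F, ec p (t * v) = if v = 0 then (Fintype.card F : ℂ) else 0 := by
  split_ifs with h
  · subst h
    simp [ec_zero, Finset.card_univ]
  · have hne : AddChar.mulShift (ecChar p) v ≠ 0 := by
      rw [AddChar.ne_zero_iff]
      obtain ⟨b, hb⟩ := trace_nondeg p h
      refine ⟨b, ?_⟩
      rw [AddChar.mulShift_apply]
      intro hcontra
      apply hb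
      have hEq1 : ecChar p (v * b) = ecChar p (0 : F) := by
        rw [hcontra]
        exact (AddChar.map_zero_eq_one _).symm
      have h0 : Algebra.trace (ZMod p) F (v * b) = Algebra.trace (ZMod p) F (0 : F) := by
        apply ZMod.injective_stdAddChar
        simpa [ecChar] using hEq1
      simpa using h0
    have hz := AddChar.sum_eq_zero_iff_ne_zero.mpr hne
    calc ∑ t : F, ec p (t * v) = ∑ t : F, AddChar.mulShift (ecChar p) v t := by
          refine Finset.sum_congr rfl fun t _ => ?_
          rw [AddChar.mulShift_apply, mul_comm, ec_eq_char]
      _ = 0 := hz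

lemma ec_sum_chi {k : ℕ} (w : Fin k → F) :
    ∑ α : Fin k → F, ec p (∑ i, α i * w i)
      = if w = 0 then ((Fintype.card F : ℂ) ^ k) else 0 := by
  calc ∑ α : Fin k → F, ec p (∑ i, α i * w i)
      = ∑ α ∈ Fintype.piFinset (fun _ : Fin k => (Finset.univ : Finset F)),
          ∏ i, ec p (α i * w i) := by
        rw [Fintype.piFinset_univ]
        exact Finset.sum_congr rfl fun α _ => ec_sum_eq_prod p _ _
    _ = ∏ i, ∑ t : F, ec p (t * w i) := by
        rw [Finset.prod_univ_sum (fun _ : Fin k => (Finset.univ : Finset F))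
          (fun i t => ec p (t * w i))]
    _ = ∏ i, if w i = 0 then (Fintype.card F : ℂ) else 0 :=
        Finset.prod_congr rfl fun i _ => ec_sum_mul p (w i)
    _ = if w = 0 then ((Fintype.card F : ℂ) ^ k) else 0 := by
        by_cases h : w = 0
        · subst h; simp
        · rw [if_neg h]
          obtain ⟨i, hi⟩ : ∃ i, w i ≠ 0 := by
            by_contra hc
            push_neg at hc
            exact h (funext hc)
          exact Finset.prod_eq_zero (Finset.mem_univ i) (if_neg hi)

end Aux

lemma chi_sub {F : Type*} [Field F] {n : ℕ} (α x y : Fin n → F) :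
    chi α (x - y) = chi α x - chi α y := by
  simp [chi, mul_sub, Finset.sum_sub_distrib]

lemma chi_add {F : Type*} [Field F] {n : ℕ} (α x y : Fin n → F) :
    chi α (x + y) = chi α x + chi α y := by
  simp [chi, mul_add, Finset.sum_add_distrib]

/-- An example `(x, b)` is generated by sampling uniform `y ∈ F_q^n`,
`z ∈ F_q^m` and setting `x = y − Aᵀz`, `b = f(y) − Σ_j z_j`. For each fixed `x`, the
conditional expectation `E[e(a·b) | x]` (expressed as a ratio of sums over the joint sample
space `(y, z)`) equals the `(a,A)`-projection
`f_A^a(x) = Σ_{α : Aα = a·1^m} (af)^̂(α)·e(χ_α(x))`. -/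
theorem stmt_14 (p ℓ : ℕ) [Fact p.Prime] {F : Type*} [Field F] [Fintype F] [DecidableEq F]
    [Algebra (ZMod p) F] (hq : Fintype.card F = p ^ ℓ) {n m : ℕ}
    (f : (Fin n → F) → F) (A : Matrix (Fin m) (Fin n) F) (a : F) (x : Fin n → F) :
    (∑ yz : (Fin n → F) × (Fin m → F),
        if yz.1 - A.transpose.mulVec yz.2 = x then ec p (a * (f yz.1 - ∑ j, yz.2 j)) else 0) /
      ((Finset.univ.filter fun yz : (Fin n → F) × (Fin m → F) =>
          yz.1 - A.transpose.mulVec yz.2 = x).card : ℂ)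
      = ∑ α ∈ Finset.univ.filter (fun α : Fin n → F => A.mulVec α = fun _ => a),
          fc p (fun y => a * f y) α * ec p (chi α x) := by
  classical
  set q : ℂ := (Fintype.card F : ℂ) with hqdef
  have hqne : q ≠ 0 := Nat.cast_ne_zero.mpr Fintype.card_ne_zero
  set S : Finset (Fin n → F) :=
    Finset.univ.filter (fun α : Fin n → F => A.mulVec α = fun _ => a) with hS
  set N : ℂ := ∑ z : Fin m → F,
      ec p (a * (f (x + A.transpose.mulVec z) - ∑ j, z j)) with hN
  -- Step A: denominator is q^m
  have hden : ((Finset.univ.filter fun yz : (Fin n → F) × (Fin m → F) =>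
      yz.1 - A.transpose.mulVec yz.2 = x).card : ℂ) = q ^ m := by
    have himg : (Finset.univ.filter fun yz : (Fin n → F) × (Fin m → F) =>
        yz.1 - A.transpose.mulVec yz.2 = x)
        = (Finset.univ : Finset (Fin m → F)).image
            (fun z => (x + A.transpose.mulVec z, z)) := by
      ext yz
      simp only [Finset.mem_filter, Finset.mem_univ, true_and, Finset.mem_image]
      constructor
      · intro h
        refine ⟨yz.2, ?_⟩
        have h1 : x + A.transpose.mulVec yz.2 = yz.1 := by
          rw [← h]; abel
        exact Prod.ext h1 rfl
      · rintro ⟨z, rfl⟩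
        simp
    rw [himg, Finset.card_image_of_injective _
      (fun z1 z2 h => congrArg Prod.snd h), Finset.card_univ,
      Fintype.card_fun, Fintype.card_fin, Nat.cast_pow]
  -- Step B: numerator
  have hnum : (∑ yz : (Fin n → F) × (Fin m → F),
      if yz.1 - A.transpose.mulVec yz.2 = x
      then ec p (a * (f yz.1 - ∑ j, yz.2 j)) else 0) = N := by
    rw [Fintype.sum_prod_type_right]
    refine Finset.sum_congr rfl fun z _ => ?_
    have hcnd : ∀ y : Fin n → F,
        (y - A.transpose.mulVec z = x) = (y = x + A.transpose.mulVec z) := by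
      intro y; rw [eq_iff_iff]; exact sub_eq_iff_eq_add
    simp_rw [hcnd]
    rw [Finset.sum_ite_eq' Finset.univ (x + A.transpose.mulVec z)
      (fun y => ec p (a * (f y - ∑ j, z j)))]
    simp
  -- inner orthogonality lemma
  have hinner : ∀ w : Fin n → F,
      q ^ m * ∑ α ∈ S, ec p (chi α w)
      = ∑ z : Fin m → F, ec p (-(a * ∑ j, z j)) *
          (if w + A.transpose.mulVec z = 0 then q ^ n else 0) := by
    intro w
    have hcond : ∀ α : Fin n → F,
        ((fun j => A.mulVec α j - a) = 0) ↔ (A.mulVec α = fun _ => a) := by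
      intro α
      constructor
      · intro h; funext j
        have := congrFun h j
        simpa [sub_eq_zero] using this
      · intro h; funext j
        simp [congrFun h j]
    calc q ^ m * ∑ α ∈ S, ec p (chi α w)
        = ∑ α ∈ S, ec p (chi α w) * q ^ m := by
          rw [Finset.mul_sum]
          exact Finset.sum_congr rfl fun α _ => by ring
      _ = ∑ α : Fin n → F, ec p (chi α w) *
            (if (fun j => A.mulVec α j - a) = 0 then q ^ m else 0) := by
          rw [hS, Finset.sum_filter]
          refine Finset.sum_congr rfl fun α _ => ?_
          by_cases h : A.mulVec α = fun _ => a
          · rw [if_pos h, if_pos ((hcond α).mpr h)]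
          · rw [if_neg h, if_neg (fun hc => h ((hcond α).mp hc)), mul_zero]
      _ = ∑ α : Fin n → F, ec p (chi α w) *
            ∑ z : Fin m → F, ec p (∑ j, z j * (A.mulVec α j - a)) := by
          refine Finset.sum_congr rfl fun α _ => ?_
          rw [ec_sum_chi p (fun j => A.mulVec α j - a)]
      _ = ∑ α : Fin n → F, ∑ z : Fin m → F,
            ec p (-(a * ∑ j, z j)) * ec p (chi α (w + A.transpose.mulVec z)) := by
          refine Finset.sum_congr rfl fun α _ => ?_
          rw [Finset.mul_sum]
          refine Finset.sum_congr rfl fun z _ => ?_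
          rw [← ec_add, ← ec_add]
          congr 1
          have hswap : ∑ j, z j * A.mulVec α j = ∑ i, α i * A.transpose.mulVec z i := by
            simp only [Matrix.mulVec, dotProduct, Matrix.transpose_apply,
              Finset.mul_sum]
            rw [Finset.sum_comm]
            exact Finset.sum_congr rfl fun i _ => Finset.sum_congr rfl fun j _ => by ring
          have hchiadd : chi α (w + A.transpose.mulVec z)
              = chi α w + ∑ i, α i * A.transpose.mulVec z i := by
            rw [chi_add]; rfl
          rw [hchiadd, ← hswap]
          simp only [mul_sub, Finset.sum_sub_distrib]
          rw [← Finset.sum_mul, mul_comm (∑ j, z j) a]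
          ring
      _ = ∑ z : Fin m → F, ec p (-(a * ∑ j, z j)) *
            ∑ α : Fin n → F, ec p (chi α (w + A.transpose.mulVec z)) := by
          rw [Finset.sum_comm]
          exact Finset.sum_congr rfl fun z _ => (Finset.mul_sum _ _ _).symm
      _ = ∑ z : Fin m → F, ec p (-(a * ∑ j, z j)) *
            (if w + A.transpose.mulVec z = 0 then q ^ n else 0) := by
          refine Finset.sum_congr rfl fun z _ => ?_
          congr 1
          have := ec_sum_chi p (w + A.transpose.mulVec z)
          simpa [chi] using this
  -- Step C : the α-sum equals N * q^n / q^m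
  have hmain : (∑ α ∈ S, (∑ y : Fin n → F, ec p (a * f y) *
      (starRingEnd ℂ) (ec p (chi α y))) * ec p (chi α x)) * q ^ m = N * q ^ n := by
    calc (∑ α ∈ S, (∑ y : Fin n → F, ec p (a * f y) *
          (starRingEnd ℂ) (ec p (chi α y))) * ec p (chi α x)) * q ^ m
        = ∑ α ∈ S, ∑ y : Fin n → F,
            ec p (a * f y) * ec p (chi α (x - y)) * q ^ m := by
          rw [Finset.sum_mul]
          refine Finset.sum_congr rfl fun α _ => ?_
          rw [Finset.sum_mul, Finset.sum_mul]
          refine Finset.sum_congr rfl fun y _ => ?_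
          rw [ec_conj, mul_assoc (ec p (a * f y)), ← ec_add]
          congr 2
          rw [chi_sub]
          ring
      _ = ∑ y : Fin n → F, ec p (a * f y) *
            (q ^ m * ∑ α ∈ S, ec p (chi α (x - y))) := by
          rw [Finset.sum_comm]
          refine Finset.sum_congr rfl fun y _ => ?_
          rw [Finset.mul_sum, Finset.mul_sum]
          exact Finset.sum_congr rfl fun α _ => by ring
      _ = ∑ y : Fin n → F, ec p (a * f y) *
            ∑ z : Fin m → F, ec p (-(a * ∑ j, z j)) *
              (if x - y + A.transpose.mulVec z = 0 then q ^ n else 0) := by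
          refine Finset.sum_congr rfl fun y _ => ?_
          rw [hinner (x - y)]
      _ = ∑ y : Fin n → F, ∑ z : Fin m → F, ec p (a * f y) *
            (ec p (-(a * ∑ j, z j)) *
              (if x - y + A.transpose.mulVec z = 0 then q ^ n else 0)) := by
          exact Finset.sum_congr rfl fun y _ => Finset.mul_sum _ _ _
      _ = ∑ z : Fin m → F, ∑ y : Fin n → F, ec p (a * f y) *
            (ec p (-(a * ∑ j, z j)) *
              (if x - y + A.transpose.mulVec z = 0 then q ^ n else 0)) := Finset.sum_comm
      _ = ∑ z : Fin m → F, ec p (-(a * ∑ j, z j)) *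
            ∑ y : Fin n → F,
              (if y = x + A.transpose.mulVec z then ec p (a * f y) * q ^ n else 0) := by
          refine Finset.sum_congr rfl fun z _ => ?_
          rw [Finset.mul_sum Finset.univ
            (fun y => if y = x + A.transpose.mulVec z then ec p (a * f y) * q ^ n else 0)
            (ec p (-(a * ∑ j, z j)))]
          refine Finset.sum_congr rfl fun y _ => ?_
          have hcondeq : (x - y + A.transpose.mulVec z = 0) ↔
              (y = x + A.transpose.mulVec z) := by
            constructor
            · intro h
              have h' : x + A.transpose.mulVec z - y = 0 := by rw [← h]; abel
              exact (sub_eq_zero.mp h').symm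
            · intro h; rw [h]; abel
          by_cases h : y = x + A.transpose.mulVec z
          · rw [if_pos h, if_pos (hcondeq.mpr h)]; ring
          · rw [if_neg h, if_neg (fun hc => h (hcondeq.mp hc))]; ring
      _ = ∑ z : Fin m → F, ec p (-(a * ∑ j, z j)) *
            (ec p (a * f (x + A.transpose.mulVec z)) * q ^ n) := by
          refine Finset.sum_congr rfl fun z _ => ?_
          congr 1
          rw [Finset.sum_ite_eq' Finset.univ (x + A.transpose.mulVec z)
            (fun y => ec p (a * f y) * q ^ n)]
          simp
      _ = N * q ^ n := by
          rw [hN, Finset.sum_mul]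
          refine Finset.sum_congr rfl fun z _ => ?_
          rw [show a * (f (x + A.transpose.mulVec z) - ∑ j, z j)
              = -(a * ∑ j, z j) + a * f (x + A.transpose.mulVec z) from by ring, ec_add]
          ring
  -- Assemble
  rw [hnum, hden]
  unfold fc
  have hcard : (Fintype.card (Fin n → F) : ℂ) = q ^ n := by
    rw [Fintype.card_fun, Fintype.card_fin, Nat.cast_pow]
  simp_rw [hcard, div_mul_eq_mul_div]
  rw [← Finset.sum_div]
  rw [div_eq_div_iff (pow_ne_zero _ hqne) (pow_ne_zero _ hqne)]
  exact hmain.symm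
end

section
/- Let a ∈ F_q, μ ∈ [0,1], and X, Y random variables in F_q with Pr[X=a, Y=a] ≥ 1/q² + μ and Pr[X=a] = Pr[Y=a] = 1/q. Define the randomized binarization B(Z) ∈ {±1}: B(Z) = 1 if Z = a; otherwise B(Z) = −1 with probability p_h = q/(2(q−1)) and B(Z) = 1 with probability 1 − p_h, with independent coin flips for X and Y. Then Pr[B(X)·B(Y) = 1] ≥ 1/2 + 2·p_h²·μ. -/
/-- Let `a ∈ F_q`, `μ ∈ [0,1]`, and `(X, Y)` random variables in `F_q` with
joint distribution `π` satisfying `Pr[X=a, Y=a] ≥ 1/q² + μ` and `Pr[X=a] = Pr[Y=a] = 1/q`.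
Binarize by `B(Z) = 1` if `Z = a`, else `B(Z) = −1` with probability `p_h = q/(2(q−1))` and
`B(Z) = 1` otherwise, with coins independent of each other and of `(X, Y)`. Then
`Pr[B(X)·B(Y) = 1] ≥ 1/2 + 2·p_h²·μ`. -/
theorem stmt_17 {F : Type*} [Field F] [Fintype F] [DecidableEq F]
    (a : F) (π : F × F → ℝ) (h0 : ∀ z, 0 ≤ π z) (h1 : ∑ z, π z = 1)
    (μ : ℝ) (hμ0 : 0 ≤ μ) (hμ1 : μ ≤ 1)
    (hXa : ∑ y : F, π (a, y) = 1 / (Fintype.card F : ℝ))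
    (hYa : ∑ x : F, π (x, a) = 1 / (Fintype.card F : ℝ))
    (hjoint : 1 / (Fintype.card F : ℝ) ^ 2 + μ ≤ π (a, a)) :
    let q : ℝ := Fintype.card F
    let ph : ℝ := q / (2 * (q - 1))
    let B : F → Bool → ℤ := fun z c => if z = a then 1 else if c then -1 else 1
    let w : Bool → ℝ := fun c => if c then ph else 1 - ph
    1 / 2 + 2 * ph ^ 2 * μ ≤
      ∑ z : F × F, ∑ c₁ : Bool, ∑ c₂ : Bool,
        π z * w c₁ * w c₂ * (if B z.1 c₁ * B z.2 c₂ = 1 then 1 else 0) := by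
  intro q ph B w
  have hq2 : (2 : ℝ) ≤ q := by
    have h : 2 ≤ Fintype.card F := Fintype.one_lt_card
    show (2 : ℝ) ≤ (Fintype.card F : ℝ)
    exact_mod_cast h
  have hq0 : q ≠ 0 := by positivity
  have hq1 : q - 1 ≠ 0 := by nlinarith
  set s : ℝ := ph ^ 2 + (1 - ph) ^ 2 with hs
  set A : ℝ := (1 - ph) - s with hA
  have key : ∀ z : F × F,
      (∑ c₁ : Bool, ∑ c₂ : Bool, π z * w c₁ * w c₂ *
        (if B z.1 c₁ * B z.2 c₂ = 1 then 1 else 0))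
      = π z * s + (if z.1 = a then π z * A else 0)
          + (if z.2 = a then π z * A else 0)
          + (if z = (a, a) then π z * (2 * ph ^ 2) else 0) := by
    intro z
    by_cases e1 : z.1 = a <;> by_cases e2 : z.2 = a <;>
      simp [Fintype.sum_bool, B, w, e1, e2, Prod.ext_iff, hs, hA] <;> ring
  rw [Finset.sum_congr rfl fun z _ => key z]
  rw [Finset.sum_add_distrib, Finset.sum_add_distrib, Finset.sum_add_distrib]
  have eS : ∑ z : F × F, π z * s = s := by
    rw [← Finset.sum_mul, h1, one_mul]
  have e1 : (∑ z : F × F, if z.1 = a then π z * A else 0) = (1 / q) * A := by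
    rw [Fintype.sum_prod_type]
    rw [Finset.sum_eq_single_of_mem a (Finset.mem_univ a)]
    · have h' : (∑ y : F, if ((a, y) : F × F).1 = a then π (a, y) * A else 0)
          = ∑ y : F, π (a, y) * A := Finset.sum_congr rfl (fun y _ => if_pos rfl)
      rw [h', ← Finset.sum_mul, hXa]
    · intro b _ hb
      simp [hb]
  have e2 : (∑ z : F × F, if z.2 = a then π z * A else 0) = (1 / q) * A := by
    rw [Fintype.sum_prod_type]
    have : ∀ x : F, (∑ y : F, if (x, y).2 = a then π (x, y) * A else 0)
        = π (x, a) * A := by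
      intro x
      simp [Finset.sum_ite_eq' Finset.univ a (fun y => π (x, y) * A)]
    rw [Finset.sum_congr rfl fun x _ => this x, ← Finset.sum_mul, hYa]
  have e3 : (∑ z : F × F, if z = (a, a) then π z * (2 * ph ^ 2) else 0)
      = π (a, a) * (2 * ph ^ 2) := by
    rw [Finset.sum_ite_eq' Finset.univ (a, a) (fun z => π z * (2 * ph ^ 2))]
    simp
  rw [eS, e1, e2, e3]
  have hph : ph = q / (2 * (q - 1)) := rfl
  have hid : s + (1 / q) * A + (1 / q) * A + (1 / q ^ 2) * (2 * ph ^ 2) = 1 / 2 := by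
    rw [hA, hs, hph]
    field_simp
    ring
  have hmono : (1 / q ^ 2 + μ) * (2 * ph ^ 2) ≤ π (a, a) * (2 * ph ^ 2) := by
    apply mul_le_mul_of_nonneg_right hjoint
    positivity
  nlinarith [hmono, hid]
end
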